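/- Let H be an m×m real symmetric matrix. Indices u and v are cospectral with respect to H if and only if there exists a real symmetric matrix R with R² = I, R eᵤ = eᵥ, and RH = HR. -/
import Mathlib

open Matrix

section Aux

variable {m : ℕ}

private lemma aux_mul_vecMulVec (A : Matrix (Fin m) (Fin m) ℝ) (w v : Fin m → ℝ) :
    A * vecMulVec w v = vecMulVec (A *ᵥ w) v := by
  ext i j
  simp only [Matrix.mul_apply, vecMulVec_apply, mulVec, dotProduct, Finset.sum_mul]
  exact Finset.sum_congr rfl fun k _ => by ring

private lemma aux_vecMulVec_mul (w v : Fin m → ℝ) (A : Matrix (Fin m) (Fin m) ℝ) :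
    vecMulVec w v * A = vecMulVec w (v ᵥ* A) := by
  ext i j
  simp only [Matrix.mul_apply, vecMulVec_apply, vecMul, dotProduct, Finset.mul_sum]
  exact Finset.sum_congr rfl fun k _ => by ring

private lemma aux_vecMulVec_mulVec (w v x : Fin m → ℝ) :
    vecMulVec w v *ᵥ x = (v ⬝ᵥ x) • w := by
  ext i
  simp only [mulVec, dotProduct, vecMulVec_apply, Pi.smul_apply, smul_eq_mul,
    Finset.sum_mul]
  exact Finset.sum_congr rfl fun k _ => by ring

private lemma aux_vecMulVec_smul_right (w v : Fin m → ℝ) (a : ℝ) :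
    vecMulVec w (a • v) = a • vecMulVec w v := by
  ext i j
  simp only [vecMulVec_apply, Pi.smul_apply, smul_eq_mul, Matrix.smul_apply]
  ring

private lemma aux_vecMulVec_symm (w : Fin m → ℝ) : (vecMulVec w w).IsSymm := by
  ext i j
  simp only [transpose_apply, vecMulVec_apply]
  ring

private lemma aux_symm_mulVec (A : Matrix (Fin m) (Fin m) ℝ) (hA : A.IsSymm)
    (x : Fin m → ℝ) : x ᵥ* A = A *ᵥ x := by
  conv_lhs => rw [← hA]
  exact vecMul_transpose A x

private lemma aux_sum_mulVec {r : ℕ} (P : Fin r → Matrix (Fin m) (Fin m) ℝ)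
    (x : Fin m → ℝ) : (∑ j, P j) *ᵥ x = ∑ j, P j *ᵥ x := by
  ext i
  simp only [mulVec, dotProduct, Matrix.sum_apply, Finset.sum_apply, Finset.sum_mul]
  exact Finset.sum_comm

private lemma aux_symm_dot (A : Matrix (Fin m) (Fin m) ℝ) (hA : A.IsSymm)
    (x y : Fin m → ℝ) : (A *ᵥ x) ⬝ᵥ y = x ⬝ᵥ (A *ᵥ y) := by
  rw [dotProduct_mulVec, aux_symm_mulVec A hA, dotProduct_comm, dotProduct_mulVec,
    aux_symm_mulVec A hA, dotProduct_comm]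

end Aux

theorem stmt3 {m r : ℕ} (H : Matrix (Fin m) (Fin m) ℝ)
    (lam : Fin r → ℝ) (E : Fin r → Matrix (Fin m) (Fin m) ℝ)
    (hH : H.IsSymm)
    (hlam : Function.Injective lam)
    (hEsymm : ∀ j, (E j).IsSymm)
    (hEidem : ∀ j, E j * E j = E j)
    (hEorth : ∀ j k, j ≠ k → E j * E k = 0)
    (hEsum : ∑ j, E j = 1)
    (hEnz : ∀ j, E j ≠ 0)
    (hspec : H = ∑ j, lam j • E j)
    (u v : Fin m) :
    (∀ j, (E j) u u = (E j) v v)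
      ↔ ∃ R : Matrix (Fin m) (Fin m) ℝ, R.IsSymm ∧ R * R = 1 ∧
          R *ᵥ (Pi.single u 1 : Fin m → ℝ) = Pi.single v 1 ∧ R * H = H * R := by
  classical
  have hHE : ∀ j, H * E j = lam j • E j := by
    intro j
    rw [hspec, Finset.sum_mul, Finset.sum_eq_single j]
    · rw [smul_mul_assoc, hEidem]
    · intro k _ hk; rw [smul_mul_assoc, hEorth k j hk, smul_zero]
    · simp
  have hEH : ∀ j, E j * H = lam j • E j := by
    intro j
    rw [hspec, Finset.mul_sum, Finset.sum_eq_single j]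
    · rw [mul_smul_comm, hEidem]
    · intro k _ hk; rw [mul_smul_comm, hEorth j k (Ne.symm hk), smul_zero]
    · simp
  constructor
  · intro hcos
    set s : Fin m → ℝ := Pi.single u 1 - Pi.single v 1 with hs
    set w : Fin r → Fin m → ℝ := fun j => E j *ᵥ s with hwdef
    set d : Fin r → ℝ := fun j => w j ⬝ᵥ w j with hddef
    set P : Fin r → Matrix (Fin m) (Fin m) ℝ :=
      fun j => E j - (2 / d j) • vecMulVec (w j) (w j) with hPdef
    have hEw : ∀ j, E j *ᵥ w j = w j := by
      intro j; rw [hwdef, mulVec_mulVec, hEidem]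
    have hEwk : ∀ j k, j ≠ k → E j *ᵥ w k = 0 := by
      intro j k hjk; rw [hwdef, mulVec_mulVec, hEorth j k hjk, zero_mulVec]
    have hd0 : ∀ j, d j = 0 → w j = 0 := by
      intro j h; exact dotProduct_self_eq_zero.mp h
    -- key quantitative fact : w j ⬝ᵥ s = d j, and w j ⬝ᵥ (Pi.single u 1) = d j / 2
    have hds : ∀ j, d j = w j ⬝ᵥ s := by
      intro j
      show (E j *ᵥ s) ⬝ᵥ (E j *ᵥ s) = (E j *ᵥ s) ⬝ᵥ s
      rw [aux_symm_dot (E j) (hEsymm j), mulVec_mulVec, hEidem, dotProduct_comm]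
    have hwu : ∀ j, w j ⬝ᵥ (Pi.single u 1 : Fin m → ℝ) = d j / 2 := by
      intro j
      have h1 : w j ⬝ᵥ (Pi.single u 1 : Fin m → ℝ) = (w j) u := by
        rw [dotProduct_single, mul_one]
      have h2 : w j ⬝ᵥ (Pi.single v 1 : Fin m → ℝ) = (w j) v := by
        rw [dotProduct_single, mul_one]
      have hdj : d j = (w j) u - (w j) v := by
        rw [hds j, hs, dotProduct_sub, h1, h2]
      have hwju : (w j) u = (E j) u u - (E j) u v := by
        simp [hwdef, hs, mulVec_sub]
      have hwjv : (w j) v = (E j) v u - (E j) v v := by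
        simp [hwdef, hs, mulVec_sub]
      have hsym : (E j) v u = (E j) u v := (hEsymm j).apply u v
      rw [h1]
      rw [hdj, hwju, hwjv, hsym, hcos j]
      ring
    -- products of building blocks
    have hEW : ∀ j k, E j * vecMulVec (w k) (w k)
        = if j = k then vecMulVec (w k) (w k) else 0 := by
      intro j k
      rw [aux_mul_vecMulVec]
      by_cases h : j = k
      · subst h; rw [hEw, if_pos rfl]
      · rw [hEwk j k h, if_neg h]
        ext i l; simp [vecMulVec_apply]
    have hWE : ∀ j k, vecMulVec (w j) (w j) * E k
        = if j = k then vecMulVec (w j) (w j) else 0 := by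
      intro j k
      rw [aux_vecMulVec_mul, aux_symm_mulVec (E k) (hEsymm k)]
      by_cases h : j = k
      · subst h; rw [hEw, if_pos rfl]
      · rw [hEwk k j (Ne.symm h), if_neg h]
        ext i l; simp [vecMulVec_apply]
    have hww : ∀ j k, j ≠ k → w j ⬝ᵥ w k = 0 := by
      intro j k hjk
      show (E j *ᵥ s) ⬝ᵥ w k = 0
      rw [aux_symm_dot (E j) (hEsymm j), hEwk j k hjk, dotProduct_zero]
    have hWW : ∀ j k, vecMulVec (w j) (w j) * vecMulVec (w k) (w k)
        = (w j ⬝ᵥ w k) • vecMulVec (w j) (w k) := by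
      intro j k
      ext i l
      simp only [Matrix.mul_apply, vecMulVec_apply, Matrix.smul_apply, smul_eq_mul,
        dotProduct, Finset.sum_mul, Finset.mul_sum]
      exact Finset.sum_congr rfl fun t _ => by ring
    -- the candidate matrix
    refine ⟨∑ j, P j, ?_, ?_, ?_, ?_⟩
    · -- symmetry
      unfold Matrix.IsSymm
      rw [transpose_sum]
      refine Finset.sum_congr rfl fun j _ => ?_
      rw [hPdef]
      simp only
      rw [transpose_sub, transpose_smul, (hEsymm j), (aux_vecMulVec_symm (w j))]
    · -- involution
      rw [Finset.sum_mul_sum]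
      have hPP : ∀ j k, P j * P k = if j = k then E j else 0 := by
        intro j k
        rw [hPdef]
        simp only
        rw [sub_mul, mul_sub, mul_sub, smul_mul_assoc, smul_mul_assoc,
          mul_smul_comm, mul_smul_comm, hEW j k, hWE j k, hWW j k]
        by_cases h : j = k
        · subst h
          rw [if_pos rfl, hEidem, if_pos rfl]
          by_cases hd : d j = 0
          · rw [hd0 j hd]
            ext i l; simp [vecMulVec_apply]
          · have hdd : w j ⬝ᵥ w j = d j := rfl
            have : (2 / d j) • ((w j ⬝ᵥ w j) • vecMulVec (w j) (w j))
                = (2 : ℝ) • vecMulVec (w j) (w j) := by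
              rw [smul_smul, hdd]
              congr 1
              field_simp
            rw [this]
            ext i l
            simp only [Matrix.sub_apply, Matrix.smul_apply, smul_eq_mul]
            ring
        · rw [if_neg h, if_neg h, if_neg h, hEorth j k h, hww j k h]
          simp
      calc ∑ j, ∑ k, P j * P k = ∑ j, E j := by
            refine Finset.sum_congr rfl fun j _ => ?_
            rw [Finset.sum_eq_single j]
            · rw [hPP j j, if_pos rfl]
            · intro k _ hk
              rw [hPP j k, if_neg (Ne.symm hk)]
            · simp
        _ = 1 := hEsum
    · -- maps e_u to e_v
      rw [aux_sum_mulVec]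
      have hPu : ∀ j, P j *ᵥ (Pi.single u 1 : Fin m → ℝ)
          = E j *ᵥ (Pi.single v 1 : Fin m → ℝ) := by
        intro j
        rw [hPdef]
        simp only
        rw [sub_mulVec, smul_mulVec, aux_vecMulVec_mulVec, hwu j, smul_smul]
        by_cases hd : d j = 0
        · have hw0 : w j = 0 := hd0 j hd
          have : E j *ᵥ (Pi.single u 1 : Fin m → ℝ)
              = E j *ᵥ (Pi.single v 1 : Fin m → ℝ) := by
            have := hw0
            rw [hwdef] at this
            simp only [hs, mulVec_sub] at this
            have h2 := sub_eq_zero.mp this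
            exact h2
          rw [this, hw0]
          simp
        · have hc : 2 / d j * (d j / 2) = 1 := by field_simp
          rw [hc, one_smul]
          have : w j = E j *ᵥ (Pi.single u 1 : Fin m → ℝ)
              - E j *ᵥ (Pi.single v 1 : Fin m → ℝ) := by
            simp only [hwdef, hs, mulVec_sub]
          rw [this]
          abel
      rw [Finset.sum_congr rfl fun j _ => hPu j, ← aux_sum_mulVec, hEsum, one_mulVec]
    · -- commutes with H
      have hHw : ∀ j, H *ᵥ w j = lam j • w j := by
        intro j
        rw [hwdef, mulVec_mulVec, hHE j, smul_mulVec]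
      have hPH : ∀ j, P j * H = H * P j := by
        intro j
        rw [hPdef]
        simp only
        rw [sub_mul, mul_sub, hEH j, hHE j, smul_mul_assoc, mul_smul_comm,
          aux_mul_vecMulVec, aux_vecMulVec_mul, aux_symm_mulVec H hH, hHw j,
          aux_vecMulVec_smul_right]
        have : vecMulVec (lam j • w j) (w j) = lam j • vecMulVec (w j) (w j) := by
          ext i l
          simp only [vecMulVec_apply, Pi.smul_apply, smul_eq_mul, Matrix.smul_apply]
          ring
        rw [this]
      rw [Finset.sum_mul, Finset.mul_sum]
      exact Finset.sum_congr rfl fun j _ => hPH j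
  · rintro ⟨R, hRsymm, hR2, hRu, hRH⟩ j
    -- R commutes with each E j
    have hERE : ∀ k l, k ≠ l → E k * R * E l = 0 := by
      intro k l hkl
      have h1 : E k * R * H * E l = lam l • (E k * R * E l) := by
        rw [mul_assoc (E k * R) H (E l), hHE l, mul_smul_comm]
      have h2 : E k * R * H * E l = lam k • (E k * R * E l) := by
        calc E k * R * H * E l = E k * (R * H) * E l := by rw [mul_assoc (E k) R H]
          _ = E k * (H * R) * E l := by rw [hRH]
          _ = E k * H * R * E l := by rw [← mul_assoc]
          _ = (lam k • E k) * R * E l := by rw [hEH k]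
          _ = lam k • (E k * R * E l) := by rw [smul_mul_assoc, smul_mul_assoc]
      have h3 : (lam l - lam k) • (E k * R * E l) = 0 := by
        rw [sub_smul, ← h1, ← h2, sub_self]
      have hne : lam l - lam k ≠ 0 :=
        sub_ne_zero.mpr fun h => hkl ((hlam h).symm)
      exact (smul_eq_zero.mp h3).resolve_left hne
    have hcomm : R * E j = E j * R := by
      have hl : R * E j = E j * R * E j := by
        calc R * E j = (∑ k, E k) * (R * E j) := by rw [hEsum, one_mul]
          _ = ∑ k, E k * (R * E j) := by rw [Finset.sum_mul]
          _ = E j * (R * E j) := by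
              rw [Finset.sum_eq_single j]
              · intro k _ hk
                rw [← mul_assoc]
                exact hERE k j hk
              · simp
          _ = E j * R * E j := by rw [mul_assoc]
      have hr : E j * R = E j * R * E j := by
        calc E j * R = E j * R * ∑ k, E k := by rw [hEsum, mul_one]
          _ = ∑ k, E j * R * E k := by rw [Finset.mul_sum]
          _ = E j * R * E j := by
              rw [Finset.sum_eq_single j]
              · intro k _ hk
                exact hERE j k (Ne.symm hk)
              · simp
      rw [hl]
      exact hr.symm
    calc E j u u
        = (Pi.single u 1 : Fin m → ℝ) ⬝ᵥ (E j *ᵥ (Pi.single u 1 : Fin m → ℝ)) := by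
          simp
      _ = (Pi.single u 1 : Fin m → ℝ)
            ⬝ᵥ ((R * R) *ᵥ (E j *ᵥ (Pi.single u 1 : Fin m → ℝ))) := by
          rw [hR2, one_mulVec]
      _ = (Pi.single u 1 : Fin m → ℝ)
            ⬝ᵥ (R *ᵥ (R *ᵥ (E j *ᵥ (Pi.single u 1 : Fin m → ℝ)))) := by
          simp only [mulVec_mulVec]
          rw [mul_assoc]
      _ = (R *ᵥ (Pi.single u 1 : Fin m → ℝ))
            ⬝ᵥ (R *ᵥ (E j *ᵥ (Pi.single u 1 : Fin m → ℝ))) :=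
          (aux_symm_dot R hRsymm _ _).symm
      _ = (Pi.single v 1 : Fin m → ℝ)
            ⬝ᵥ ((R * E j) *ᵥ (Pi.single u 1 : Fin m → ℝ)) := by
          rw [hRu, mulVec_mulVec]
      _ = (Pi.single v 1 : Fin m → ℝ)
            ⬝ᵥ ((E j * R) *ᵥ (Pi.single u 1 : Fin m → ℝ)) := by rw [hcomm]
      _ = (Pi.single v 1 : Fin m → ℝ)
            ⬝ᵥ (E j *ᵥ (R *ᵥ (Pi.single u 1 : Fin m → ℝ))) := by
          rw [← mulVec_mulVec]
      _ = (Pi.single v 1 : Fin m → ℝ)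
            ⬝ᵥ (E j *ᵥ (Pi.single v 1 : Fin m → ℝ)) := by rw [hRu]
      _ = E j v v := by simp
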